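/- Let V₁, V₂, V₃ be finite-dimensional vector spaces over a field, and let R ⊆ V₂ × V₁ and R' ⊆ V₃ × V₂ be linear relations (subspaces). Define ann♮(R) ⊆ V₁* × V₂* as the set of pairs (μ₁, μ₂) such that ⟨μ₁, v₁⟩ = ⟨μ₂, v₂⟩ whenever (v₂, v₁) ∈ R, viewed as a relation V₁* ⇢ V₂*. Then ann♮(R' ∘ R) = ann♮(R') ∘ ann♮(R), where ∘ denotes composition of relations. -/

import Mathlib

open Module

variable {K : Type*} [Field K]

/-- Composition of linear relations: a relation `V₁ ⇢ V₂` is a subspace of `V₂ × V₁`. -/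
def LinRel.comp {V₁ V₂ V₃ : Type*}
    [AddCommGroup V₁] [Module K V₁] [AddCommGroup V₂] [Module K V₂]
    [AddCommGroup V₃] [Module K V₃]
    (R' : Submodule K (V₃ × V₂)) (R : Submodule K (V₂ × V₁)) :
    Submodule K (V₃ × V₁) where
  carrier := {p | ∃ b, (p.1, b) ∈ R' ∧ (b, p.2) ∈ R}
  add_mem' := by
    rintro x y ⟨b, hb', hb⟩ ⟨c, hc', hc⟩
    exact ⟨b + c, R'.add_mem hb' hc', R.add_mem hb hc⟩
  zero_mem' := ⟨0, R'.zero_mem, R.zero_mem⟩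
  smul_mem' := by
    rintro a x ⟨b, hb', hb⟩
    exact ⟨a • b, R'.smul_mem a hb', R.smul_mem a hb⟩

/-- The relation `ann♮(R) : V₁* ⇢ V₂*` of a linear relation `R : V₁ ⇢ V₂`:
pairs `(μ₂, μ₁)` such that `⟨μ₁, v₁⟩ = ⟨μ₂, v₂⟩` for all `(v₂, v₁) ∈ R`. -/
def LinRel.ann {V₁ V₂ : Type*}
    [AddCommGroup V₁] [Module K V₁] [AddCommGroup V₂] [Module K V₂]
    (R : Submodule K (V₂ × V₁)) :
    Submodule K (Module.Dual K V₂ × Module.Dual K V₁) where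
  carrier := {μ | ∀ v ∈ R, μ.2 v.2 = μ.1 v.1}
  add_mem' := by
    intro x y hx hy v hv
    have h1 := hx v hv
    have h2 := hy v hv
    simp only [Prod.fst_add, Prod.snd_add, LinearMap.add_apply]
    rw [h1, h2]
  zero_mem' := by intro v hv; simp
  smul_mem' := by
    intro a x hx v hv
    have h1 := hx v hv
    simp only [Prod.smul_fst, Prod.smul_snd, LinearMap.smul_apply]
    rw [h1]

/-- The annihilator relation of a composition is the composition of the
annihilator relations: `ann♮(R' ∘ R) = ann♮(R') ∘ ann♮(R)`. -/
theorem ann_comp_eq_comp_ann {V₁ V₂ V₃ : Type*}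
    [AddCommGroup V₁] [Module K V₁] [FiniteDimensional K V₁]
    [AddCommGroup V₂] [Module K V₂] [FiniteDimensional K V₂]
    [AddCommGroup V₃] [Module K V₃] [FiniteDimensional K V₃]
    (R : Submodule K (V₂ × V₁)) (R' : Submodule K (V₃ × V₂)) :
    LinRel.ann (LinRel.comp R' R) = LinRel.comp (LinRel.ann R') (LinRel.ann R) := by
  ext ⟨μ₃, μ₁⟩
  constructor
  · intro h
    -- build the "partial graph" of the desired μ₂ inside V₂ × K
    classical
    -- linear map ((a₂,v₁),(v₃,b₂)) ↦ (a₂ + b₂, μ₁ v₁ + μ₃ v₃)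
    let L : ((V₂ × V₁) × (V₃ × V₂)) →ₗ[K] (V₂ × K) :=
      LinearMap.prod
        ((LinearMap.fst K V₂ V₁ ∘ₗ LinearMap.fst K (V₂ × V₁) (V₃ × V₂)) +
         (LinearMap.snd K V₃ V₂ ∘ₗ LinearMap.snd K (V₂ × V₁) (V₃ × V₂)))
        ((μ₁ ∘ₗ LinearMap.snd K V₂ V₁ ∘ₗ LinearMap.fst K (V₂ × V₁) (V₃ × V₂)) +
         (μ₃ ∘ₗ LinearMap.fst K V₃ V₂ ∘ₗ LinearMap.snd K (V₂ × V₁) (V₃ × V₂)))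
    let g : Submodule K (V₂ × K) := (R.prod R').map L
    have hg : ∀ x : V₂ × K, x ∈ g → x.1 = 0 → x.2 = 0 := by
      rintro x ⟨⟨⟨a₂, v₁⟩, ⟨v₃, b₂⟩⟩, ⟨hR, hR'⟩, rfl⟩ hx0
      simp only [L, LinearMap.prod_apply, LinearMap.add_apply, LinearMap.comp_apply,
        LinearMap.fst_apply, LinearMap.snd_apply, Function.prod] at hx0 ⊢
      -- a₂ + b₂ = 0, so (-v₃, v₁) ∈ comp R' R via a₂
      have hneg : ((-v₃ : V₃), a₂) ∈ R' := by
        have hb : -b₂ = a₂ := neg_eq_of_add_eq_zero_left hx0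
        have := R'.neg_mem hR'
        rw [Prod.neg_mk] at this
        rwa [hb] at this
      have hcomp : ((-v₃ : V₃), v₁) ∈ LinRel.comp R' R := ⟨a₂, hneg, hR⟩
      have := h (-v₃, v₁) hcomp
      simp only [map_neg] at this
      linear_combination this
    -- extend the partial linear map to all of V₂
    obtain ⟨μ₂, hμ₂⟩ := LinearMap.exists_extend g.toLinearPMap.toFun
    have key : ∀ p : V₂ × K, p ∈ g → μ₂ p.1 = p.2 := by
      intro p hab
      rw [← Submodule.toLinearPMap_graph_eq g hg, LinearPMap.mem_graph_iff] at hab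
      obtain ⟨x, hx1, hx2⟩ := hab
      rw [← hx1, ← hx2]
      exact LinearMap.congr_fun hμ₂ x
    refine ⟨μ₂, ?_, ?_⟩
    · rintro ⟨v₃, v₂⟩ hv
      refine (key (v₂, μ₃ v₃) ⟨((0, 0), (v₃, v₂)), ⟨R.zero_mem, hv⟩, ?_⟩)
      simp [L]
    · rintro ⟨v₂, v₁⟩ hv
      refine (key (v₂, μ₁ v₁) ⟨((v₂, v₁), (0, 0)), ⟨hv, R'.zero_mem⟩, ?_⟩).symm
      simp [L]
  · rintro ⟨μ₂, h', hR⟩ ⟨v₃, v₁⟩ ⟨v₂, hv', hv⟩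
    exact (hR (v₂, v₁) hv).trans (h' (v₃, v₂) hv')
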